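/- Let (a, b, n) be a triple of positive integers with b < a < n such that the following inequality FAILS: n·b ≥ ⌊(a + b + 1)²/4⌋ − 1 if b is odd or a + b ≡ 1 (mod 4), and n·b ≥ ⌊(a + b + 1)²/4⌋ otherwise. Then there exists a nongraphic decreasing sequence of positive integers of length n having even sum, with maximal element a and minimal element b. -/

import Mathlib

open Finset


/-- A sequence of length `n` is graphic if it is the degree sequence of some
finite simple graph on `n` vertices. -/
def IsGraphic {n : ℕ} (d : Fin n → ℕ) : Prop :=
  ∃ G : SimpleGraph (Fin n), ∀ i, (G.neighborSet i).ncard = d i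

/-- The refined Zverovich–Zverovich bound: `n·b ≥ ⌊(a+b+1)²/4⌋ - 1` if `b` is odd or
`a + b ≡ 1 (mod 4)`, and `n·b ≥ ⌊(a+b+1)²/4⌋` otherwise. -/
def ZZCond (a b n : ℕ) : Prop :=
  if Odd b ∨ (a + b) % 4 = 1 then n * b ≥ (a + b + 1) ^ 2 / 4 - 1
  else n * b ≥ (a + b + 1) ^ 2 / 4

lemma eg_bound {n : ℕ} (G : SimpleGraph (Fin n)) (S : Finset (Fin n)) :
    ∑ v ∈ S, (G.neighborSet v).ncard
      ≤ S.card * (S.card - 1) + ∑ v ∈ Sᶜ, min ((G.neighborSet v).ncard) S.card := by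
  classical
  have hF : ∀ v, (G.neighborSet v).ncard = (univ.filter (fun u => G.Adj v u)).card := by
    intro v
    have h : G.neighborSet v = ↑(univ.filter (fun u => G.Adj v u)) := by
      ext u; simp [SimpleGraph.neighborSet]
    rw [h, Set.ncard_coe_finset]
  simp only [hF]
  set F : Fin n → Finset (Fin n) := fun v => univ.filter (fun u => G.Adj v u) with hFdef
  have hsplit : ∀ v, (F v).card = (F v ∩ S).card + (F v \ S).card := by
    intro v
    have := Finset.card_sdiff_add_card_inter (F v) S
    omega
  have b1 : ∑ v ∈ S, (F v ∩ S).card ≤ S.card * (S.card - 1) := by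
    have h : ∀ v ∈ S, (F v ∩ S).card ≤ S.card - 1 := by
      intro v hv
      have hsub : F v ∩ S ⊆ S.erase v := by
        intro u hu
        simp only [Finset.mem_inter, hFdef, Finset.mem_filter, Finset.mem_univ, true_and] at hu
        exact Finset.mem_erase.2 ⟨(G.ne_of_adj hu.1).symm, hu.2⟩
      calc (F v ∩ S).card ≤ (S.erase v).card := Finset.card_le_card hsub
        _ = S.card - 1 := Finset.card_erase_of_mem hv
    calc ∑ v ∈ S, (F v ∩ S).card ≤ ∑ _v ∈ S, (S.card - 1) := Finset.sum_le_sum h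
      _ = S.card * (S.card - 1) := by rw [Finset.sum_const, smul_eq_mul]
  have l1 : ∀ v, (F v \ S).card = ∑ u ∈ Sᶜ, (if G.Adj v u then 1 else 0) := by
    intro v
    have h : F v \ S = Sᶜ.filter (fun u => G.Adj v u) := by
      ext u
      simp only [Finset.mem_sdiff, hFdef, Finset.mem_filter, Finset.mem_univ, true_and,
        Finset.mem_compl]
      tauto
    rw [h, Finset.card_filter]
  have l2 : ∀ u, (F u ∩ S).card = ∑ v ∈ S, (if G.Adj v u then 1 else 0) := by
    intro u
    have h : F u ∩ S = S.filter (fun v => G.Adj v u) := by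
      ext v
      simp only [Finset.mem_inter, hFdef, Finset.mem_filter, Finset.mem_univ, true_and,
        G.adj_comm]
      tauto
    rw [h, Finset.card_filter]
  have b2 : ∑ v ∈ S, (F v \ S).card ≤ ∑ u ∈ Sᶜ, min ((F u).card) S.card := by
    have key : ∑ v ∈ S, (F v \ S).card = ∑ u ∈ Sᶜ, (F u ∩ S).card := by
      simp only [l1, l2]
      exact Finset.sum_comm
    rw [key]
    apply Finset.sum_le_sum
    intro u _
    exact le_min (Finset.card_le_card Finset.inter_subset_left)
      (Finset.card_le_card Finset.inter_subset_right)
  calc ∑ v ∈ S, (F v).card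
      = ∑ v ∈ S, ((F v ∩ S).card + (F v \ S).card) :=
        Finset.sum_congr rfl fun v _ => hsplit v
    _ = ∑ v ∈ S, (F v ∩ S).card + ∑ v ∈ S, (F v \ S).card := Finset.sum_add_distrib
    _ ≤ S.card * (S.card - 1) + ∑ v ∈ Sᶜ, min ((F v).card) S.card := Nat.add_le_add b1 b2

lemma not_graphic_of {n : ℕ} (d : Fin n → ℕ) (S : Finset (Fin n))
    (h : S.card * (S.card - 1) + ∑ v ∈ Sᶜ, min (d v) S.card < ∑ v ∈ S, d v) :
    ¬ IsGraphic d := by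
  rintro ⟨G, hG⟩
  have hb := eg_bound G S
  simp only [hG] at hb
  omega

theorem sharpness (a b n : ℕ) (hb : 0 < b) (hba : b < a) (han : a < n)
    (hfail : ¬ ZZCond a b n) :
    ∃ d : Fin n → ℕ, Antitone d ∧ (∀ i, 0 < d i) ∧ Even (∑ i, d i) ∧
      d ⟨0, by omega⟩ = a ∧ d ⟨n - 1, by omega⟩ = b ∧ ¬ IsGraphic d := by
  classical
  set s := a + b + 1 with hs
  set k := s / 2 with hkdef
  obtain ⟨X, hX1, hX2⟩ : ∃ X, k * (s - k) = X ∧ s ^ 2 / 4 = X := by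
    rcases Nat.even_or_odd s with ⟨m, hm⟩ | ⟨m, hm⟩
    · refine ⟨m * m, ?_, ?_⟩
      · have hk : k = m := by omega
        have hsk : s - m = m := by omega
        rw [hk, hsk]
      · have h4 : s ^ 2 = 4 * (m * m) := by rw [hm]; ring
        omega
    · refine ⟨m * (m + 1), ?_, ?_⟩
      · have hk : k = m := by omega
        have hsk : s - m = m + 1 := by omega
        rw [hk, hsk]
      · have h4 : s ^ 2 = 4 * (m * (m + 1)) + 1 := by rw [hm]; ring
        omega
  have hbk : b + 1 ≤ k := by omega
  have hka : k ≤ a := by omega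
  have h2k : 2 * k ≤ s := by omega
  have hkn : k < n := by omega
  -- arithmetic consequences of failure of ZZCond
  rw [ZZCond] at hfail
  have hfX : n * b < X := by
    by_cases hc : Odd b ∨ (a + b) % 4 = 1
    · rw [if_pos hc] at hfail
      rw [← hs, hX2] at hfail
      omega
    · rw [if_neg hc] at hfail
      rw [← hs, hX2] at hfail
      omega
  have hstrong : (Odd b ∨ (a + b) % 4 = 1) → n * b + 2 ≤ X := by
    intro hc
    rw [if_pos hc, ← hs, hX2] at hfail
    omega
  have hparity : ¬ Even (k * a + (n - k) * b) → (Odd b ∨ (a + b) % 4 = 1) := by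
    intro h
    by_cases hbo : Odd b
    · exact Or.inl hbo
    · right
      have hbe : Even b := Nat.not_odd_iff_even.mp hbo
      have h1 : Even ((n - k) * b) := hbe.mul_left _
      have h2 : Odd (k * a) := by
        rcases Nat.even_or_odd (k * a) with he | ho
        · exact absurd (he.add h1) h
        · exact ho
      obtain ⟨hk1, ha1⟩ := Nat.odd_mul.mp h2
      rw [Nat.odd_iff] at hk1 ha1
      rw [Nat.even_iff] at hbe
      omega
  set S : Finset (Fin n) := Finset.Iio (⟨k, hkn⟩ : Fin n) with hSdef
  have hScard : S.card = k := by
    rw [hSdef]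
    simpa using Fin.card_Iio (⟨k, hkn⟩ : Fin n)
  have hSmem : ∀ v : Fin n, v ∈ S ↔ (v : ℕ) < k := by
    intro v
    rw [hSdef, Finset.mem_Iio, Fin.lt_def]
  have hSCmem : ∀ v : Fin n, v ∈ Sᶜ ↔ ¬ (v : ℕ) < k := by
    intro v
    rw [Finset.mem_compl, hSmem]
  have hSCcard : Sᶜ.card = n - k := by
    rw [Finset.card_compl, hScard, Fintype.card_fin]
  -- the key arithmetic inequalities
  have q1 : k * (k - 1) + k = k * k := by
    have h1 : 1 ≤ k := by omega
    zify [h1]; ring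
  have q2 : k * b + (n - k) * b = n * b := by
    have h1 : k ≤ n := by omega
    zify [h1]; ring
  have q3 : k * k + k * (s - k) = k * a + k * b + k := by
    have h1 : k ≤ s := by omega
    zify [h1]; rw [hs]; push_cast; ring
  by_cases hpar : Even (k * a + (n - k) * b)
  · -- plain construction
    refine ⟨fun i => if (i : ℕ) < k then a else b, ?_, ?_, ?_, ?_, ?_, ?_⟩
    · intro i j hij
      have hij' : (i : ℕ) ≤ (j : ℕ) := hij
      simp only
      split_ifs <;> omega
    · intro i; simp only; split_ifs <;> omega
    · have step1 : ∀ v ∈ S, (if (v : ℕ) < k then a else b) = a :=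
        fun v hv => if_pos ((hSmem v).mp hv)
      have step2 : ∀ v ∈ Sᶜ, (if (v : ℕ) < k then a else b) = b :=
        fun v hv => if_neg ((hSCmem v).mp hv)
      rw [← Finset.sum_add_sum_compl S, Finset.sum_congr rfl step1,
        Finset.sum_congr rfl step2, Finset.sum_const, Finset.sum_const, hScard, hSCcard,
        smul_eq_mul, smul_eq_mul]
      exact hpar
    · simp only [if_pos (show (0 : ℕ) < k by omega)]
    · simp only [if_neg (show ¬ (n - 1 : ℕ) < k by omega)]
    · apply not_graphic_of _ S
      rw [hScard]
      have step1 : ∀ v ∈ S, (if (v : ℕ) < k then a else b) = a :=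
        fun v hv => if_pos ((hSmem v).mp hv)
      have step2 : ∀ v ∈ Sᶜ, min (if (v : ℕ) < k then a else b) k = b := by
        intro v hv
        have := (hSCmem v).mp hv
        split_ifs <;> omega
      rw [Finset.sum_congr rfl step1, Finset.sum_congr rfl step2, Finset.sum_const,
        Finset.sum_const, hScard, hSCcard, smul_eq_mul, smul_eq_mul]
      linarith [hfX, hX1, q1, q2, q3]
  · -- adjusted construction
    have hc := hparity hpar
    have hst := hstrong hc
    have hkn2 : k + 2 ≤ n := by
      by_contra hcon
      have hn1 : n = k + 1 := by omega
      have hak : a = k := by omega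
      have hbk' : b = k - 1 := by omega
      have hsk : s - k = k := by omega
      rw [hsk] at hX1
      have h1 : 1 ≤ k := by omega
      have h2 : 1 ≤ k * k := Nat.one_le_iff_ne_zero.mpr (by positivity)
      have h3 : n * b = k * k - 1 := by
        rw [hn1, hbk']
        zify [h1, h2]; ring
      omega
    refine ⟨fun i => if (i : ℕ) < k then a else if (i : ℕ) = k then b + 1 else b,
      ?_, ?_, ?_, ?_, ?_, ?_⟩
    · intro i j hij
      have hij' : (i : ℕ) ≤ (j : ℕ) := hij
      simp only
      split_ifs <;> omega
    · intro i; simp only; split_ifs <;> omega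
    · have step1 : ∀ v ∈ S, (if (v : ℕ) < k then a else if (v : ℕ) = k then b + 1 else b) = a :=
        fun v hv => if_pos ((hSmem v).mp hv)
      have step2 : ∀ v ∈ Sᶜ, (if (v : ℕ) < k then a else if (v : ℕ) = k then b + 1 else b)
          = b + (if (v : ℕ) = k then 1 else 0) := by
        intro v hv
        have := (hSCmem v).mp hv
        split_ifs <;> omega
      have hfilt : Sᶜ.filter (fun v : Fin n => (v : ℕ) = k) = {(⟨k, hkn⟩ : Fin n)} := by
        ext v
        simp only [Finset.mem_filter, hSCmem, Finset.mem_singleton, Fin.ext_iff]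
        omega
      have hione : (∑ v ∈ Sᶜ, if (v : ℕ) = k then 1 else 0) = 1 := by
        rw [← Finset.card_filter, hfilt, Finset.card_singleton]
      rw [← Finset.sum_add_sum_compl S, Finset.sum_congr rfl step1,
        Finset.sum_congr rfl step2, Finset.sum_add_distrib, Finset.sum_const,
        Finset.sum_const, hScard, hSCcard, smul_eq_mul, smul_eq_mul, hione]
      rw [show k * a + ((n - k) * b + 1) = (k * a + (n - k) * b) + 1 by ring]
      exact Nat.even_add_one.mpr hpar
    · simp only [if_pos (show (0 : ℕ) < k by omega)]
    · have h1 : ¬ (n - 1 : ℕ) < k := by omega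
      have h2 : ¬ (n - 1 : ℕ) = k := by omega
      simp only [if_neg h1, if_neg h2]
    · apply not_graphic_of _ S
      rw [hScard]
      have step1 : ∀ v ∈ S, (if (v : ℕ) < k then a else if (v : ℕ) = k then b + 1 else b) = a :=
        fun v hv => if_pos ((hSmem v).mp hv)
      have step2 : ∀ v ∈ Sᶜ,
          min (if (v : ℕ) < k then a else if (v : ℕ) = k then b + 1 else b) k
          = b + (if (v : ℕ) = k then 1 else 0) := by
        intro v hv
        have := (hSCmem v).mp hv
        split_ifs <;> omega
      have hfilt : Sᶜ.filter (fun v : Fin n => (v : ℕ) = k) = {(⟨k, hkn⟩ : Fin n)} := by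
        ext v
        simp only [Finset.mem_filter, hSCmem, Finset.mem_singleton, Fin.ext_iff]
        omega
      have hione : (∑ v ∈ Sᶜ, if (v : ℕ) = k then 1 else 0) = 1 := by
        rw [← Finset.card_filter, hfilt, Finset.card_singleton]
      rw [Finset.sum_congr rfl step1, Finset.sum_congr rfl step2, Finset.sum_add_distrib,
        Finset.sum_const, Finset.sum_const, hScard, hSCcard, smul_eq_mul, smul_eq_mul, hione]
      linarith [hst, hX1, q1, q2, q3]
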